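/- If a nonempty binary word x is an antisquare, then the number of runs of x is congruent to 2 or 3 modulo 4. -/

import Mathlib

/-- Bitwise complement of a binary word. -/
def comp (x : List Bool) : List Bool := x.map (fun b => !b)

/-- An antisquare is a nonempty word of the form `y ++ comp y`. -/
def Antisquare (x : List Bool) : Prop := ∃ y : List Bool, y ≠ [] ∧ x = y ++ comp y

/-- `w` has period `p ≥ 1` if `w[i] = w[i+p]` whenever both indices are valid. -/
def HasPeriod (w : List Bool) (p : ℕ) : Prop :=
  1 ≤ p ∧ ∀ i, i + p < w.length → w.getD i false = w.getD (i + p) false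

/-- The exponent of a finite word: its length divided by its least period. -/
noncomputable def exponent (w : List Bool) : ℝ :=
  (w.length : ℝ) / ((sInf {p : ℕ | HasPeriod w p} : ℕ) : ℝ)

/-- `u` is a factor of the right-infinite word `w : ℕ → Bool`. -/
def FactorInf (u : List Bool) (w : ℕ → Bool) : Prop :=
  ∃ i : ℕ, u = (List.range u.length).map (fun t => w (i + t))

/-- `u` is a factor of the bi-infinite word `w : ℤ → Bool`. -/
def FactorBi (u : List Bool) (w : ℤ → Bool) : Prop :=
  ∃ i : ℤ, u = (List.range u.length).map (fun t => w (i + (t : ℤ)))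

/-- A binary word is good if its only antisquare factors are `01` and `10`. -/
def Good (w : List Bool) : Prop :=
  ∀ u, u <:+: w → Antisquare u → u = [false, true] ∨ u = [true, false]

/-- The number of runs (maximal blocks of identical consecutive symbols) of a word. -/
def runCount (x : List Bool) : ℕ := (x.destutter (· ≠ ·)).length

/-- Count of adjacent unequal pairs. -/
def cnt : List Bool → ℕ
  | a :: b :: l => (if a = b then 0 else 1) + cnt (b :: l)
  | _ => 0

lemma destutter'_len (l : List Bool) :
    ∀ a, (List.destutter' (· ≠ ·) a l).length = 1 + cnt (a :: l) := by
  induction l with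
  | nil => intro a; simp [List.destutter', cnt]
  | cons b l ih =>
    intro a
    rw [List.destutter'_cons]
    by_cases h : a = b
    · subst h; simp [cnt, ih]
    · simp only [h, if_true, if_false, ne_eq, not_false_iff, List.length_cons, ih, cnt]
      omega

lemma runCount_cons (a : Bool) (l : List Bool) :
    runCount (a :: l) = 1 + cnt (a :: l) := by
  rw [runCount, List.destutter_cons', destutter'_len]

lemma cnt_app : ∀ (l : List Bool) (a b : Bool) (z : List Bool),
    cnt (a :: (l ++ b :: z)) =
      cnt (a :: l) + cnt (b :: z) + (if l.getLastD a = b then 0 else 1) := by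
  intro l
  induction l with
  | nil => intro a b z; simp [cnt]; omega
  | cons c l ih =>
    intro a b z
    have h1 : cnt (a :: ((c :: l) ++ b :: z)) =
        (if a = c then 0 else 1) + cnt (c :: (l ++ b :: z)) := rfl
    have h2 : cnt (a :: c :: l) = (if a = c then 0 else 1) + cnt (c :: l) := rfl
    rw [h1, ih, h2, List.getLastD_cons]
    omega

lemma cnt_parity : ∀ (l : List Bool) (a : Bool),
    Even (cnt (a :: l)) ↔ a = l.getLastD a := by
  intro l
  induction l with
  | nil => intro a; simp [cnt]
  | cons b l ih =>
    intro a
    have h1 : cnt (a :: b :: l) = (if a = b then 0 else 1) + cnt (b :: l) := rfl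
    have h2 : (b :: l).getLastD a = l.getLastD b := List.getLastD_cons
    rw [h1, h2]
    have := ih b
    by_cases h : a = b
    · subst h; simpa using this
    · simp only [h, if_false]
      rw [Nat.add_comm, Nat.even_add_one, this]
      generalize l.getLastD b = L
      cases a <;> cases b <;> cases L <;> simp_all

lemma cnt_comp : ∀ (l : List Bool) (a : Bool), cnt ((!a) :: comp l) = cnt (a :: l) := by
  intro l
  induction l with
  | nil => intro a; simp [cnt, comp]
  | cons b l ih =>
    intro a
    have h1 : comp (b :: l) = (!b) :: comp l := rfl
    have h2 : cnt ((!a) :: (!b) :: comp l) = (if (!a) = (!b) then 0 else 1) + cnt ((!b) :: comp l) := rfl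
    have h3 : cnt (a :: b :: l) = (if a = b then 0 else 1) + cnt (b :: l) := rfl
    rw [h1, h2, h3, ih]
    congr 1
    cases a <;> cases b <;> simp

/-- the number of runs of an antisquare is ≡ 2 or 3 (mod 4). -/
theorem stmt_14 (x : List Bool) (hx : Antisquare x) :
    runCount x % 4 = 2 ∨ runCount x % 4 = 3 := by
  obtain ⟨y, hy, rfl⟩ := hx
  obtain ⟨a, l, rfl⟩ := List.exists_cons_of_ne_nil hy
  have hcomp : comp (a :: l) = (!a) :: comp l := rfl
  have h0 : (a :: l) ++ comp (a :: l) = a :: (l ++ (!a) :: comp l) := by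
    rw [hcomp]; rfl
  rw [h0, runCount_cons, cnt_app, cnt_comp]
  set c := cnt (a :: l) with hc
  have hpar := cnt_parity l a
  rw [← hc] at hpar
  by_cases h : l.getLastD a = a
  · have heven : Even c := hpar.mpr h.symm
    have hne : ¬ l.getLastD a = !a := by rw [h]; cases a <;> simp
    rw [if_neg hne]
    obtain ⟨k, hk⟩ := heven
    omega
  · have hodd : ¬ Even c := fun he => h (hpar.mp he).symm
    have heq : l.getLastD a = !a := by
      cases hl : l.getLastD a <;> cases a <;> simp_all
    rw [if_pos heq]
    rw [Nat.not_even_iff] at hodd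
    omega
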